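/- arXiv:1711.11517 — 2 statements merged into one kernel-verified Lean document; each statement's English description precedes it below -/
import Mathlib

section
/- Let D be a strongly connected digraph of girth 4, |V(D)| ≥ 6, containing the 4-cycles (u,v,w,z,u) and (u,v,w,x,u) where x→z ∈ A(D), d⁺(z) = 1, d⁻(z) = 2, and suppose there exists a vertex a₁ ∉ {u,v,w,x,z} with w→a₁ ∈ A(D) and a₁→u ∈ A(D). Then D is λ'-connected and λ'(D) ≤ d⁺(u)+d⁺(v)+d⁺(w)+d⁺(z) − 4. -/
/-- A digraph on vertex type `V`, given by its adjacency (arc) relation. -/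
structure Digr (V : Type) where
  Adj : V → V → Prop

namespace Digr

variable {V : Type}

/-- Reachability by directed paths. -/
def Reach (D : Digr V) : V → V → Prop := Relation.ReflTransGen D.Adj

/-- A digraph is strongly connected if every vertex reaches every other. -/
def StronglyConnected (D : Digr V) : Prop := ∀ u v : V, D.Reach u v

/-- An oriented graph: no loops and no pair of opposite arcs. -/
def Oriented (D : Digr V) : Prop := ∀ u v : V, D.Adj u v → ¬ D.Adj v u

/-- The digraph contains at least one arc. -/
def HasArc (D : Digr V) : Prop := ∃ u v : V, D.Adj u v

/-- Delete a set of arcs. -/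
def delArcs (D : Digr V) (S : Set (V × V)) : Digr V :=
  ⟨fun a b => D.Adj a b ∧ (a, b) ∉ S⟩

/-- Delete a set of vertices (keep arcs avoiding them). -/
def delVerts (D : Digr V) (X : Set V) : Digr V :=
  ⟨fun a b => D.Adj a b ∧ a ∉ X ∧ b ∉ X⟩

/-- Induced subdigraph on a vertex set. -/
def induce (D : Digr V) (X : Set V) : Digr V :=
  ⟨fun a b => a ∈ X ∧ b ∈ X ∧ D.Adj a b⟩

/-- The induced subdigraph on `X` is strongly connected. -/
def StronglyConnectedOn (D : Digr V) (X : Set V) : Prop :=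
  ∀ u ∈ X, ∀ v ∈ X, (D.induce X).Reach u v

/-- Mutual reachability. -/
def MReach (D : Digr V) (u v : V) : Prop := D.Reach u v ∧ D.Reach v u

/-- `X` is a strong component: an equivalence class of mutual reachability. -/
def IsStrongComponent (D : Digr V) (X : Set V) : Prop :=
  ∃ x : V, X = {y | D.MReach x y}

/-- `S` is a restricted arc-cut: a set of arcs whose deletion leaves a
non-trivial strong component `X` (containing an arc) such that deleting the
vertices of `X` from `D` leaves an arc. -/
def IsRestrictedArcCut (D : Digr V) (S : Set (V × V)) : Prop :=
  (∀ p ∈ S, D.Adj p.1 p.2) ∧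
  ∃ X : Set V, (D.delArcs S).IsStrongComponent X ∧
    (∃ u ∈ X, ∃ v ∈ X, (D.delArcs S).Adj u v) ∧
    (D.delVerts X).HasArc

/-- A digraph is λ'-connected if it admits a restricted arc-cut. -/
def LambdaPrimeConnected (D : Digr V) : Prop :=
  ∃ S : Set (V × V), D.IsRestrictedArcCut S

/-- λ'(D): minimum size of a restricted arc-cut. -/
noncomputable def lambdaPrime (D : Digr V) [Fintype V] : ℕ :=
  sInf {n : ℕ | ∃ S : Finset (V × V), D.IsRestrictedArcCut ↑S ∧ S.card = n}

/-- λ(D): the arc-connectivity, the minimum size of an arc set whose removal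
destroys strong connectivity. -/
noncomputable def lambda (D : Digr V) [Fintype V] : ℕ :=
  sInf {n : ℕ | ∃ S : Finset (V × V), (∀ p ∈ S, D.Adj p.1 p.2) ∧
    ¬ (D.delArcs ↑S).StronglyConnected ∧ S.card = n}

/-- The list `l` of distinct vertices forms a directed cycle. -/
def IsCycleList (D : Digr V) (l : List V) : Prop :=
  ∃ h : l ≠ [], l.Nodup ∧ l.Chain' D.Adj ∧ D.Adj (l.getLast h) (l.head h)

/-- The girth: minimum length of a directed cycle. -/
noncomputable def girth (D : Digr V) : ℕ :=
  sInf {n : ℕ | ∃ l : List V, D.IsCycleList l ∧ l.length = n}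

/-- `(u,v,w,z,u)` is a 4-cycle of `D`. -/
def Cycle4 (D : Digr V) (u v w z : V) : Prop := D.IsCycleList [u, v, w, z]

/-- Out-degree. -/
def outDeg (D : Digr V) [Fintype V] [DecidableRel D.Adj] (v : V) : ℕ :=
  (Finset.univ.filter fun w => D.Adj v w).card

/-- In-degree. -/
def inDeg (D : Digr V) [Fintype V] [DecidableRel D.Adj] (v : V) : ℕ :=
  (Finset.univ.filter fun w => D.Adj w v).card

/-- ξ(D): minimum over girth cycles `C` of
`min (Σ d⁺ − g, Σ d⁻ − g)`. -/
noncomputable def xi (D : Digr V) [Fintype V] [DecidableRel D.Adj] : ℤ :=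
  sInf {k : ℤ | ∃ l : List V, D.IsCycleList l ∧ l.length = D.girth ∧
    k = min (((l.map D.outDeg).sum : ℤ) - (D.girth : ℤ))
            (((l.map D.inDeg).sum : ℤ) - (D.girth : ℤ))}

/-- ∂⁺(X): the set of arcs from `X` to its complement. -/
noncomputable def outBoundary (D : Digr V) [Fintype V] (X : Set V) : Finset (V × V) :=
  (Set.toFinite {p : V × V | p.1 ∈ X ∧ p.2 ∉ X ∧ D.Adj p.1 p.2}).toFinset

/-- ∂⁻(X): the set of arcs from the complement of `X` into `X`. -/
noncomputable def inBoundary (D : Digr V) [Fintype V] (X : Set V) : Finset (V × V) :=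
  (Set.toFinite {p : V × V | p.1 ∉ X ∧ p.2 ∈ X ∧ D.Adj p.1 p.2}).toFinset

/-- The list of arcs of a cycle given as a vertex list. -/
def cycleArcs (l : List V) : List (V × V) := l.zip (l.rotate 1)

end Digr
section Helper

open Finset

private lemma helper4 {V : Type} [Fintype V] (D : Digr V) [DecidableRel D.Adj]
    (a b c d p q : V)
    (hab : D.Adj a b) (hbc : D.Adj b c) (hcd : D.Adj c d) (hda : D.Adj d a)
    (hnd : ([a, b, c, d] : List V).Nodup)
    (hpq : D.Adj p q) (hp : p ∉ ({a, b, c, d} : Set V))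
    (hq : q ∉ ({a, b, c, d} : Set V)) :
    D.LambdaPrimeConnected ∧
      (D.lambdaPrime : ℤ) ≤
        (D.outDeg a + D.outDeg b + D.outDeg c + D.outDeg d : ℤ) - 4 := by
  classical
  simp only [List.nodup_cons, List.mem_cons, List.not_mem_nil, or_false,
    List.mem_singleton, List.nodup_nil, and_true, not_or] at hnd
  obtain ⟨⟨hab', hac', had'⟩, ⟨hbc', hbd'⟩, hcd', -⟩ := hnd
  set X : Set V := {a, b, c, d} with hX
  set S := D.outBoundary X with hSdef
  have memS : ∀ r : V × V, r ∈ S ↔ r.1 ∈ X ∧ r.2 ∉ X ∧ D.Adj r.1 r.2 := by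
    intro r
    simp [hSdef, Digr.outBoundary, Set.Finite.mem_toFinset]
  have haX : a ∈ X := by simp [hX]
  have hbX : b ∈ X := by simp [hX]
  have hcX : c ∈ X := by simp [hX]
  have hdX : d ∈ X := by simp [hX]
  have keep : ∀ s t : V, D.Adj s t → t ∈ X → (D.delArcs ↑S).Adj s t := by
    intro s t h ht
    refine ⟨h, fun hmem => ?_⟩
    rw [Finset.mem_coe, memS] at hmem
    exact hmem.2.1 ht
  -- reach cycle arcs
  have rab : (D.delArcs ↑S).Reach a b := Relation.ReflTransGen.single (keep _ _ hab hbX)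
  have rbc : (D.delArcs ↑S).Reach b c := Relation.ReflTransGen.single (keep _ _ hbc hcX)
  have rcd : (D.delArcs ↑S).Reach c d := Relation.ReflTransGen.single (keep _ _ hcd hdX)
  have rda : (D.delArcs ↑S).Reach d a := Relation.ReflTransGen.single (keep _ _ hda haX)
  have inv : ∀ y, (D.delArcs ↑S).Reach a y → y ∈ X := by
    intro y h
    induction h with
    | refl => exact haX
    | tail h1 h2 ih =>
      by_contra hy
      exact h2.2 (by rw [Finset.mem_coe, memS]; exact ⟨ih, hy, h2.1⟩)
  have comp : X = {y | (D.delArcs ↑S).MReach a y} := by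
    ext y
    constructor
    · intro hy
      rcases hy with h | h | h | h
      · subst h; exact ⟨Relation.ReflTransGen.refl, Relation.ReflTransGen.refl⟩
      · subst h
        exact ⟨rab, rbc.trans (rcd.trans rda)⟩
      · subst h
        exact ⟨rab.trans rbc, rcd.trans rda⟩
      · subst h
        exact ⟨rab.trans (rbc.trans rcd), rda⟩
    · intro hy
      exact inv y hy.1
  have cut : D.IsRestrictedArcCut ↑S := by
    refine ⟨fun r hr => ?_, X, ⟨a, comp⟩, ⟨a, haX, b, hbX, keep _ _ hab hbX⟩,
      ⟨p, q, hpq, hp, hq⟩⟩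
    rw [Finset.mem_coe, memS] at hr
    exact hr.2.2
  -- cardinality bound
  set G : V → Finset (V × V) :=
    fun s => (Finset.univ.filter fun t => D.Adj s t).image fun t => (s, t) with hG
  have hGcard : ∀ s, (G s).card = D.outDeg s := by
    intro s
    rw [hG]
    rw [Finset.card_image_of_injective _ (fun x y h => by simpa using h)]
    rfl
  have hGmem : ∀ s (r : V × V), r ∈ G s ↔ r.1 = s ∧ D.Adj s r.2 := by
    intro s r
    simp only [hG, Finset.mem_image, Finset.mem_filter, Finset.mem_univ, true_and]
    constructor
    · rintro ⟨t, ht, rfl⟩; exact ⟨rfl, ht⟩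
    · rintro ⟨rfl, h⟩; exact ⟨r.2, h, rfl⟩
  set Xf : Finset V := {a, b, c, d} with hXf
  have hdisjG : (↑Xf : Set V).Pairwise fun s s' => Disjoint (G s) (G s') := by
    intro s _ s' _ hss
    rw [Finset.disjoint_left]
    intro r hr hr'
    rw [hGmem] at hr hr'
    exact hss (hr.1 ▸ hr'.1.symm ▸ rfl)
  set B := Xf.biUnion G with hB
  have hBcard : B.card = D.outDeg a + D.outDeg b + D.outDeg c + D.outDeg d := by
    rw [hB, Finset.card_biUnion (fun s hs s' hs' h => hdisjG (by exact_mod_cast hs)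
      (by exact_mod_cast hs') h)]
    rw [hXf]
    rw [Finset.sum_insert (by simp [hab', hac', had']),
      Finset.sum_insert (by simp [hbc', hbd']),
      Finset.sum_insert (by simp [hcd']), Finset.sum_singleton]
    simp [hGcard]
    ring
  set I : Finset (V × V) := {(a, b), (b, c), (c, d), (d, a)} with hI
  have hIcard : I.card = 4 := by
    rw [hI]
    rw [Finset.card_insert_of_notMem (by simp [Prod.ext_iff, hab', hac', had']),
      Finset.card_insert_of_notMem (by simp [Prod.ext_iff, hbc', hbd']),
      Finset.card_insert_of_notMem (by simp [Prod.ext_iff, hcd']),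
      Finset.card_singleton]
  have hImem : ∀ r : V × V, r ∈ I → r.1 ∈ X ∧ r.2 ∈ X ∧ D.Adj r.1 r.2 := by
    intro r hr
    rw [hI] at hr
    simp only [Finset.mem_insert, Finset.mem_singleton] at hr
    rcases hr with rfl | rfl | rfl | rfl
    · exact ⟨haX, hbX, hab⟩
    · exact ⟨hbX, hcX, hbc⟩
    · exact ⟨hcX, hdX, hcd⟩
    · exact ⟨hdX, haX, hda⟩
  have hdisj : Disjoint S I := by
    rw [Finset.disjoint_left]
    intro r hr hr'
    rw [memS] at hr
    exact hr.2.1 (hImem r hr').2.1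
  have hsub : S ∪ I ⊆ B := by
    intro r hr
    rw [Finset.mem_union] at hr
    have hr' : r.1 ∈ X ∧ D.Adj r.1 r.2 := by
      rcases hr with hr | hr
      · rw [memS] at hr; exact ⟨hr.1, hr.2.2⟩
      · exact ⟨(hImem r hr).1, (hImem r hr).2.2⟩
    rw [hB, Finset.mem_biUnion]
    refine ⟨r.1, ?_, (hGmem r.1 r).2 ⟨rfl, hr'.2⟩⟩
    rw [hXf]
    have := hr'.1
    rw [hX] at this
    simpa using this
  have hcardle : S.card + 4 ≤ D.outDeg a + D.outDeg b + D.outDeg c + D.outDeg d := by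
    rw [← hIcard, ← Finset.card_union_of_disjoint hdisj, ← hBcard]
    exact Finset.card_le_card hsub
  have hlp : D.lambdaPrime ≤ S.card := Nat.sInf_le ⟨S, cut, rfl⟩
  refine ⟨⟨↑S, cut⟩, ?_⟩
  have h1 : (D.lambdaPrime : ℤ) ≤ S.card := by exact_mod_cast hlp
  have h2 : (S.card : ℤ) + 4 ≤
      (D.outDeg a : ℤ) + D.outDeg b + D.outDeg c + D.outDeg d := by exact_mod_cast hcardle
  omega

end Helper

/-- Subcase 3.1 step: with `x→z`, `d⁺(z)=1`, `d⁻(z)=2` and a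
vertex `a₁` with `w→a₁→u`, `D` is λ'-connected and
`λ'(D) ≤ d⁺u+d⁺v+d⁺w+d⁺z−4`. -/
theorem stmt16 {V : Type} [Fintype V] (D : Digr V) [DecidableRel D.Adj]
    (hO : D.Oriented) (hS : D.StronglyConnected) (hg : D.girth = 4)
    (hcard : 6 ≤ Fintype.card V)
    (u v w z x a₁ : V) (hC : D.Cycle4 u v w z) (hC' : D.Cycle4 u v w x)
    (hxz : D.Adj x z) (hz1 : D.outDeg z = 1) (hz2 : D.inDeg z = 2)
    (ha : a₁ ∉ ({u, v, w, x, z} : Set V))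
    (hwa : D.Adj w a₁) (hau : D.Adj a₁ u) :
    D.LambdaPrimeConnected ∧
      (D.lambdaPrime : ℤ) ≤
        (D.outDeg u + D.outDeg v + D.outDeg w + D.outDeg z : ℤ) - 4 := by
  classical
  obtain ⟨hne, hnd, hch, hlast⟩ := hC
  obtain ⟨hne', hnd', hch', hlast'⟩ := hC'
  simp only [List.Chain', List.isChain_cons_cons, List.isChain_singleton, and_true] at hch hch'
  obtain ⟨huv, hvw, hwz⟩ := hch
  obtain ⟨-, -, hwx⟩ := hch'
  have hzu : D.Adj z u := by simpa using hlast
  have hxu : D.Adj x u := by simpa using hlast'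
  simp only [List.nodup_cons, List.mem_cons, List.not_mem_nil, or_false,
    List.mem_singleton, List.nodup_nil, and_true, not_or] at hnd hnd'
  obtain ⟨⟨huv', huw', huz'⟩, ⟨hvw', hvz'⟩, hwz', -⟩ := hnd
  obtain ⟨⟨-, -, hux'⟩, ⟨-, hvx'⟩, hwx', -⟩ := hnd'
  simp only [Set.mem_insert_iff, Set.mem_singleton_iff, not_or] at ha
  obtain ⟨hau', hav', haw', hax', haz'⟩ := ha
  have notri : ∀ p q r : V, p ≠ q → p ≠ r → q ≠ r →
      D.Adj p q → D.Adj q r → D.Adj r p → False := by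
    intro p q r h1 h2 h3 hpq hqr hrp
    have h3' : D.girth ≤ 3 := by
      refine Nat.sInf_le ⟨[p, q, r], ⟨by simp, by simp [h1, h2, h3], ?_, ?_⟩, rfl⟩
      · simp [List.Chain', hpq, hqr]
      · simpa using hrp
    omega
  by_cases hcase : ∃ t, t ≠ u ∧ D.Adj a₁ t
  · obtain ⟨t, htu, hat⟩ := hcase
    have htv : t ≠ v := by
      intro h
      rw [h] at hat
      exact notri a₁ v w hav' haw' hvw' hat hvw hwa
    have htw : t ≠ w := by
      intro h
      rw [h] at hat
      exact hO w a₁ hwa hat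
    have htz : t ≠ z := by
      intro h
      rw [h] at hat
      have hsub : ({w, x, a₁} : Finset V) ⊆ Finset.univ.filter fun s => D.Adj s z := by
        intro s hs
        simp only [Finset.mem_insert, Finset.mem_singleton] at hs
        simp only [Finset.mem_filter, Finset.mem_univ, true_and]
        rcases hs with rfl | rfl | rfl
        · exact hwz
        · exact hxz
        · exact hat
      have hc3 : ({w, x, a₁} : Finset V).card = 3 := by
        rw [Finset.card_insert_of_notMem (by simp [hwx', Ne.symm haw']),
          Finset.card_insert_of_notMem (by simp [Ne.symm hax']),
          Finset.card_singleton]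
      have := Finset.card_le_card hsub
      rw [hc3] at this
      have : 3 ≤ D.inDeg z := this
      omega
    have := helper4 D u v w z a₁ t huv hvw hwz hzu
      (by simp [huv', huw', huz', hvw', hvz', hwz'])
      hat (by simp [hau', hav', haw', haz']) (by simp [htu, htv, htw, htz])
    exact this
  · push_neg at hcase
    have hall : ∀ t, D.Adj a₁ t → t = u := by
      intro t ht
      by_contra h
      exact hcase t h ht
    have hdeg : D.outDeg a₁ = 1 := by
      have heq : (Finset.univ.filter fun t => D.Adj a₁ t) = {u} := by
        ext s
        simp only [Finset.mem_filter, Finset.mem_univ, true_and, Finset.mem_singleton]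
        exact ⟨fun h => hall s h, fun h => h ▸ hau⟩
      unfold Digr.outDeg
      rw [heq, Finset.card_singleton]
    have := helper4 D u v w a₁ x z huv hvw hwa hau
      (by simp [huv', huw', hvw', Ne.symm hau', Ne.symm hav', Ne.symm haw'])
      hxz (by simp [Ne.symm hux', Ne.symm hvx', Ne.symm hwx', Ne.symm hax'])
      (by simp [Ne.symm huz', Ne.symm hvz', Ne.symm hwz', Ne.symm haz'])
    refine ⟨this.1, ?_⟩
    have h2 := this.2
    rw [hdeg] at h2
    rw [hz1]
    omega
end

section
/- Let D be a strongly connected oriented graph of girth 4 in which, for some 4-cycle (u,v,w,z,u), the digraph D − {u,v,w,z} consists only of isolated vertices (contains no arc), and suppose D contains no 4-cycle sharing exactly two arcs with (u,v,w,z,u). Then D is isomorphic to a member of family H₁: its vertex set is {u,v,w,z} ∪ A ∪ B ∪ C ∪ E where u→a→v (a∈A), v→b→w (b∈B), w→c→z (c∈C), z→e→u (e∈E), and these together with the cycle arcs are all the arcs of D. -/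
private lemma cardlem_aux {V : Type} [DecidableEq V] (a b c d t : V)
    (hab : a ≠ b) (hac : a ≠ c) (had : a ≠ d) (hbc : b ≠ c) (hbd : b ≠ d)
    (hcd : c ≠ d) (hta : t ≠ a) (htb : t ≠ b) (htc : t ≠ c) (htd : t ≠ d) :
    (([(a,t),(t,c),(c,d),(d,a)] : List (V × V)).toFinset ∩
      ([(a,b),(b,c),(c,d),(d,a)] : List (V × V)).toFinset).card = 2 := by
  have h : (([(a,t),(t,c),(c,d),(d,a)] : List (V × V)).toFinset ∩
      ([(a,b),(b,c),(c,d),(d,a)] : List (V × V)).toFinset) = {(c, d), (d, a)} := by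
    ext ⟨x, y⟩
    simp only [Finset.mem_inter, List.mem_toFinset, List.mem_cons, List.not_mem_nil,
      or_false, Finset.mem_insert, Finset.mem_singleton, Prod.mk.injEq]
    constructor
    · rintro ⟨h1 | h1 | h1 | h1, h2 | h2 | h2 | h2⟩ <;> simp_all
    · rintro (⟨rfl, rfl⟩ | ⟨rfl, rfl⟩) <;> simp
  rw [h, Finset.card_pair (by simp [Prod.ext_iff]; tauto)]

/-- If `D − {u,v,w,z}` has no arc and no 4-cycle of `D` shares
exactly two arcs with `(u,v,w,z,u)`, then `D` is a member of family H₁. -/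
theorem stmt18 {V : Type} [Fintype V] [DecidableEq V] (D : Digr V)
    (hO : D.Oriented) (hS : D.StronglyConnected) (hg : D.girth = 4)
    (u v w z : V) (hC : D.Cycle4 u v w z)
    (hiso : ¬ (D.delVerts {u, v, w, z}).HasArc)
    (hno : ¬ ∃ l : List V, D.IsCycleList l ∧ l.length = 4 ∧
      ((Digr.cycleArcs l).toFinset ∩ (Digr.cycleArcs [u, v, w, z]).toFinset).card = 2) :
    ∃ A B C E : Set V,
      (∀ t ∈ A ∪ B ∪ C ∪ E, t ∉ ({u, v, w, z} : Set V)) ∧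
      List.Pairwise Disjoint [A, B, C, E] ∧
      (∀ t : V, t ∈ ({u, v, w, z} : Set V) ∪ A ∪ B ∪ C ∪ E) ∧
      (∀ p q : V, D.Adj p q ↔
        (p = u ∧ q = v) ∨ (p = v ∧ q = w) ∨ (p = w ∧ q = z) ∨ (p = z ∧ q = u) ∨
        (p = u ∧ q ∈ A) ∨ (p ∈ A ∧ q = v) ∨
        (p = v ∧ q ∈ B) ∨ (p ∈ B ∧ q = w) ∨
        (p = w ∧ q ∈ C) ∨ (p ∈ C ∧ q = z) ∨
        (p = z ∧ q ∈ E) ∨ (p ∈ E ∧ q = u)) := by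
  classical
  obtain ⟨hh, hnd, hch, hlh⟩ := hC
  simp only [List.Chain', List.isChain_cons_cons, List.isChain_singleton, and_true] at hch
  obtain ⟨huv, hvw, hwz⟩ := hch
  have hzu : D.Adj z u := by simpa using hlh
  simp only [List.nodup_cons, List.mem_cons, List.not_mem_nil, or_false, not_or,
    List.nodup_nil, and_true] at hnd
  obtain ⟨⟨nuv, nuw, nuz⟩, ⟨nvw, nvz⟩, nwz, -⟩ := hnd
  have hne : ∀ a b : V, D.Adj a b → a ≠ b := by
    rintro a b h rfl; exact hO a a h h
  have hge : ∀ l : List V, D.IsCycleList l → 4 ≤ l.length := by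
    intro l hl
    have h1 : D.girth ≤ l.length := by
      rw [Digr.girth]; exact Nat.sInf_le ⟨l, hl, rfl⟩
    omega
  have no3 : ∀ a b c : V, D.Adj a b → D.Adj b c → D.Adj c a → False := by
    intro a b c h1 h2 h3
    have h4 := hge [a, b, c] ⟨by simp, by
      simp [hne a b h1, hne b c h2, (hne c a h3).symm], by
      simp [List.Chain', List.isChain_cons_cons, h1, h2], by simpa using h3⟩
    simp at h4
  have hQarc : ∀ a b : V, D.Adj a b →
      a ∈ ({u, v, w, z} : Set V) ∨ b ∈ ({u, v, w, z} : Set V) := by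
    intro a b hab
    by_contra hcon
    push_neg at hcon
    exact hiso ⟨a, b, hab, hcon.1, hcon.2⟩
  have hout : ∀ t : V, t ≠ u → ∃ q, D.Adj t q := by
    intro t ht
    rcases (hS t u).cases_head with h | ⟨b, hb, -⟩
    · exact absurd h ht
    · exact ⟨b, hb⟩
  have hin : ∀ t : V, t ≠ u → ∃ p, D.Adj p t := by
    intro t ht
    rcases (hS u t).cases_tail with h | ⟨b, -, hb⟩
    · exact absurd h ht
    · exact ⟨b, hb⟩
  have eC : Digr.cycleArcs [u, v, w, z] = [(u,v),(v,w),(w,z),(z,u)] := by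
    simp [Digr.cycleArcs, List.rotate]
  have hno4 : ∀ t : V, t ∉ ({u, v, w, z} : Set V) →
      ¬ (D.Adj u t ∧ D.Adj t w) ∧ ¬ (D.Adj v t ∧ D.Adj t z) ∧
      ¬ (D.Adj w t ∧ D.Adj t u) ∧ ¬ (D.Adj z t ∧ D.Adj t v) := by
    intro t ht
    simp only [Set.mem_insert_iff, Set.mem_singleton_iff, not_or] at ht
    obtain ⟨ntu, ntv, ntw, ntz⟩ := ht
    refine ⟨fun ⟨h1, h2⟩ => ?_, fun ⟨h1, h2⟩ => ?_, fun ⟨h1, h2⟩ => ?_,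
      fun ⟨h1, h2⟩ => ?_⟩
    · refine hno ⟨[u, t, w, z], ⟨by simp, ?_, ?_, ?_⟩, rfl, ?_⟩
      · simp [Ne.symm ntu, ntw, ntz, nuw, nuz, nwz]
      · simp [List.Chain', List.isChain_cons_cons, h1, h2, hwz]
      · simpa using hzu
      · have e1 : Digr.cycleArcs [u, t, w, z] = [(u,t),(t,w),(w,z),(z,u)] := by
          simp [Digr.cycleArcs, List.rotate]
        rw [e1, eC]
        exact cardlem_aux u v w z t nuv nuw nuz nvw nvz nwz ntu ntv ntw ntz
    · refine hno ⟨[v, t, z, u], ⟨by simp, ?_, ?_, ?_⟩, rfl, ?_⟩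
      · simp [Ne.symm ntv, ntz, ntu, nvz, Ne.symm nuv, Ne.symm nuz]
      · simp [List.Chain', List.isChain_cons_cons, h1, h2, hzu]
      · simpa using huv
      · have e1 : Digr.cycleArcs [v, t, z, u] = [(v,t),(t,z),(z,u),(u,v)] := by
          simp [Digr.cycleArcs, List.rotate]
        rw [e1, eC]
        have e3 : ([(u,v),(v,w),(w,z),(z,u)] : List (V × V)).toFinset
            = ([(v,w),(w,z),(z,u),(u,v)] : List (V × V)).toFinset := by
          ext x; simp; tauto
        rw [e3]
        exact cardlem_aux v w z u t nvw nvz (Ne.symm nuv) nwz (Ne.symm nuw)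
          (Ne.symm nuz) ntv ntw ntz ntu
    · refine hno ⟨[w, t, u, v], ⟨by simp, ?_, ?_, ?_⟩, rfl, ?_⟩
      · simp [Ne.symm ntw, ntu, ntv, Ne.symm nuw, Ne.symm nvw, nuv]
      · simp [List.Chain', List.isChain_cons_cons, h1, h2, huv]
      · simpa using hvw
      · have e1 : Digr.cycleArcs [w, t, u, v] = [(w,t),(t,u),(u,v),(v,w)] := by
          simp [Digr.cycleArcs, List.rotate]
        rw [e1, eC]
        have e3 : ([(u,v),(v,w),(w,z),(z,u)] : List (V × V)).toFinset
            = ([(w,z),(z,u),(u,v),(v,w)] : List (V × V)).toFinset := by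
          ext x; simp; tauto
        rw [e3]
        exact cardlem_aux w z u v t nwz (Ne.symm nuw) (Ne.symm nvw) (Ne.symm nuz)
          (Ne.symm nvz) nuv ntw ntz ntu ntv
    · refine hno ⟨[z, t, v, w], ⟨by simp, ?_, ?_, ?_⟩, rfl, ?_⟩
      · simp [Ne.symm ntz, ntv, ntw, Ne.symm nvz, Ne.symm nwz, nvw]
      · simp [List.Chain', List.isChain_cons_cons, h1, h2, hvw]
      · simpa using hwz
      · have e1 : Digr.cycleArcs [z, t, v, w] = [(z,t),(t,v),(v,w),(w,z)] := by
          simp [Digr.cycleArcs, List.rotate]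
        rw [e1, eC]
        have e3 : ([(u,v),(v,w),(w,z),(z,u)] : List (V × V)).toFinset
            = ([(z,u),(u,v),(v,w),(w,z)] : List (V × V)).toFinset := by
          ext x; simp; tauto
        rw [e3]
        exact cardlem_aux z u v w t (Ne.symm nuz) (Ne.symm nvz) (Ne.symm nwz) nuv
          nuw nvw ntz ntu ntv ntw
  have key : ∀ t, t ∉ ({u, v, w, z} : Set V) → ∀ p q : V, D.Adj p t → D.Adj t q →
      (p = u ∧ q = v) ∨ (p = v ∧ q = w) ∨ (p = w ∧ q = z) ∨ (p = z ∧ q = u) := by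
    intro t ht p q hpt htq
    obtain ⟨k1, k2, k3, k4⟩ := hno4 t ht
    have hp : p ∈ ({u, v, w, z} : Set V) := (hQarc p t hpt).resolve_right ht
    have hq : q ∈ ({u, v, w, z} : Set V) := (hQarc t q htq).resolve_left ht
    simp only [Set.mem_insert_iff, Set.mem_singleton_iff] at hp hq
    rcases hp with rfl | rfl | rfl | rfl <;> rcases hq with rfl | rfl | rfl | rfl
    · exact absurd htq (hO _ t hpt)
    · exact Or.inl ⟨rfl, rfl⟩
    · exact absurd ⟨hpt, htq⟩ k1
    · exact (no3 _ t _ hpt htq hzu).elim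
    · exact (no3 _ t _ hpt htq huv).elim
    · exact absurd htq (hO _ t hpt)
    · exact Or.inr (Or.inl ⟨rfl, rfl⟩)
    · exact absurd ⟨hpt, htq⟩ k2
    · exact absurd ⟨hpt, htq⟩ k3
    · exact (no3 _ t _ hpt htq hvw).elim
    · exact absurd htq (hO _ t hpt)
    · exact Or.inr (Or.inr (Or.inl ⟨rfl, rfl⟩))
    · exact Or.inr (Or.inr (Or.inr ⟨rfl, rfl⟩))
    · exact absurd ⟨hpt, htq⟩ k4
    · exact (no3 _ t _ hpt htq hwz).elim
    · exact absurd htq (hO _ t hpt)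
  have nQu : ∀ t : V, t ∉ ({u, v, w, z} : Set V) → t ≠ u := by
    intro t ht e; exact ht (by simp [e])
  have outA : ∀ t, t ∉ ({u, v, w, z} : Set V) → D.Adj u t → D.Adj t v := by
    intro t ht h1
    obtain ⟨q, hq⟩ := hout t (nQu t ht)
    rcases key t ht u q h1 hq with ⟨-, rfl⟩ | ⟨e, -⟩ | ⟨e, -⟩ | ⟨e, -⟩
    · exact hq
    · exact absurd e nuv
    · exact absurd e nuw
    · exact absurd e nuz
  have outB : ∀ t, t ∉ ({u, v, w, z} : Set V) → D.Adj v t → D.Adj t w := by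
    intro t ht h1
    obtain ⟨q, hq⟩ := hout t (nQu t ht)
    rcases key t ht v q h1 hq with ⟨e, -⟩ | ⟨-, rfl⟩ | ⟨e, -⟩ | ⟨e, -⟩
    · exact absurd e.symm nuv
    · exact hq
    · exact absurd e nvw
    · exact absurd e nvz
  have outC : ∀ t, t ∉ ({u, v, w, z} : Set V) → D.Adj w t → D.Adj t z := by
    intro t ht h1
    obtain ⟨q, hq⟩ := hout t (nQu t ht)
    rcases key t ht w q h1 hq with ⟨e, -⟩ | ⟨e, -⟩ | ⟨-, rfl⟩ | ⟨e, -⟩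
    · exact absurd e.symm nuw
    · exact absurd e.symm nvw
    · exact hq
    · exact absurd e nwz
  have outE : ∀ t, t ∉ ({u, v, w, z} : Set V) → D.Adj z t → D.Adj t u := by
    intro t ht h1
    obtain ⟨q, hq⟩ := hout t (nQu t ht)
    rcases key t ht z q h1 hq with ⟨e, -⟩ | ⟨e, -⟩ | ⟨e, -⟩ | ⟨-, rfl⟩
    · exact absurd e.symm nuz
    · exact absurd e.symm nvz
    · exact absurd e.symm nwz
    · exact hq
  have uniqIn : ∀ t, t ∉ ({u, v, w, z} : Set V) → ∀ p p' : V,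
      D.Adj p t → D.Adj p' t → p = p' := by
    intro t ht p p' h h'
    obtain ⟨q, hq⟩ := hout t (nQu t ht)
    rcases key t ht p q h hq with ⟨rfl, rfl⟩ | ⟨rfl, rfl⟩ | ⟨rfl, rfl⟩ | ⟨rfl, rfl⟩ <;>
      rcases key t ht p' _ h' hq with ⟨rfl, h2⟩ | ⟨rfl, h2⟩ | ⟨rfl, h2⟩ | ⟨rfl, h2⟩ <;>
      first
        | rfl
        | exact absurd h2 (by assumption)
        | exact absurd h2.symm (by assumption)
  refine ⟨{t | t ∉ ({u, v, w, z} : Set V) ∧ D.Adj u t},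
    {t | t ∉ ({u, v, w, z} : Set V) ∧ D.Adj v t},
    {t | t ∉ ({u, v, w, z} : Set V) ∧ D.Adj w t},
    {t | t ∉ ({u, v, w, z} : Set V) ∧ D.Adj z t}, ?_, ?_, ?_, ?_⟩
  · intro t ht
    simp only [Set.mem_union, Set.mem_setOf_eq] at ht
    tauto
  · have dis : ∀ a b : V, a ≠ b →
        Disjoint {t | t ∉ ({u, v, w, z} : Set V) ∧ D.Adj a t}
          {t | t ∉ ({u, v, w, z} : Set V) ∧ D.Adj b t} := by
      intro a b hab
      rw [Set.disjoint_left]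
      rintro t ⟨ht, h1⟩ ⟨-, h2⟩
      exact hab (uniqIn t ht a b h1 h2)
    refine List.Pairwise.cons ?_ (List.Pairwise.cons ?_ (List.Pairwise.cons ?_
      (List.Pairwise.cons ?_ List.Pairwise.nil)))
    · intro s hs
      simp only [List.mem_cons, List.not_mem_nil, or_false] at hs
      rcases hs with rfl | rfl | rfl
      exacts [dis u v nuv, dis u w nuw, dis u z nuz]
    · intro s hs
      simp only [List.mem_cons, List.not_mem_nil, or_false] at hs
      rcases hs with rfl | rfl
      exacts [dis v w nvw, dis v z nvz]
    · intro s hs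
      simp only [List.mem_cons, List.not_mem_nil, or_false] at hs
      rcases hs with rfl
      exact dis w z nwz
    · intro s hs
      simp at hs
  · intro t
    by_cases ht : t ∈ ({u, v, w, z} : Set V)
    · simp only [Set.mem_union]; tauto
    · obtain ⟨p, hp⟩ := hin t (nQu t ht)
      have hpQ : p ∈ ({u, v, w, z} : Set V) := (hQarc p t hp).resolve_right ht
      simp only [Set.mem_insert_iff, Set.mem_singleton_iff] at hpQ
      simp only [Set.mem_union, Set.mem_setOf_eq]
      rcases hpQ with rfl | rfl | rfl | rfl <;> tauto
  · intro p q
    constructor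
    · intro hpq
      by_cases hpQ : p ∈ ({u, v, w, z} : Set V) <;>
        by_cases hqQ : q ∈ ({u, v, w, z} : Set V)
      · simp only [Set.mem_insert_iff, Set.mem_singleton_iff] at hpQ hqQ
        rcases hpQ with rfl | rfl | rfl | rfl <;> rcases hqQ with rfl | rfl | rfl | rfl
        · exact (hne _ _ hpq rfl).elim
        · exact Or.inl ⟨rfl, rfl⟩
        · exact (no3 _ _ z hpq hwz hzu).elim
        · exact absurd hpq (hO _ _ hzu)
        · exact absurd hpq (hO _ _ huv)
        · exact (hne _ _ hpq rfl).elim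
        · exact Or.inr (Or.inl ⟨rfl, rfl⟩)
        · exact (no3 _ _ u hpq hzu huv).elim
        · exact (no3 _ _ v hpq huv hvw).elim
        · exact absurd hpq (hO _ _ hvw)
        · exact (hne _ _ hpq rfl).elim
        · exact Or.inr (Or.inr (Or.inl ⟨rfl, rfl⟩))
        · exact Or.inr (Or.inr (Or.inr (Or.inl ⟨rfl, rfl⟩)))
        · exact (no3 _ _ w hpq hvw hwz).elim
        · exact absurd hpq (hO _ _ hwz)
        · exact (hne _ _ hpq rfl).elim
      · simp only [Set.mem_insert_iff, Set.mem_singleton_iff] at hpQ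
        rcases hpQ with rfl | rfl | rfl | rfl
        · exact Or.inr (Or.inr (Or.inr (Or.inr (Or.inl ⟨rfl, hqQ, hpq⟩))))
        · refine Or.inr (Or.inr (Or.inr (Or.inr (Or.inr (Or.inr
            (Or.inl ⟨rfl, hqQ, hpq⟩)))))) 
        · refine Or.inr (Or.inr (Or.inr (Or.inr (Or.inr (Or.inr (Or.inr (Or.inr
            (Or.inl ⟨rfl, hqQ, hpq⟩))))))))
        · refine Or.inr (Or.inr (Or.inr (Or.inr (Or.inr (Or.inr (Or.inr (Or.inr
            (Or.inr (Or.inr (Or.inl ⟨rfl, hqQ, hpq⟩))))))))))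
      · obtain ⟨x, hx⟩ := hin p (nQu p hpQ)
        rcases key p hpQ x q hx hpq with ⟨rfl, rfl⟩ | ⟨rfl, rfl⟩ | ⟨rfl, rfl⟩ | ⟨rfl, rfl⟩
        · exact Or.inr (Or.inr (Or.inr (Or.inr (Or.inr
            (Or.inl ⟨⟨hpQ, hx⟩, rfl⟩)))))
        · refine Or.inr (Or.inr (Or.inr (Or.inr (Or.inr (Or.inr (Or.inr
            (Or.inl ⟨⟨hpQ, hx⟩, rfl⟩)))))))
        · refine Or.inr (Or.inr (Or.inr (Or.inr (Or.inr (Or.inr (Or.inr (Or.inr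
            (Or.inr (Or.inl ⟨⟨hpQ, hx⟩, rfl⟩)))))))))
        · refine Or.inr (Or.inr (Or.inr (Or.inr (Or.inr (Or.inr (Or.inr (Or.inr
            (Or.inr (Or.inr (Or.inr ⟨⟨hpQ, hx⟩, rfl⟩))))))))))
      · exact absurd (hQarc p q hpq) (by tauto)
    · rintro (⟨rfl, rfl⟩ | ⟨rfl, rfl⟩ | ⟨rfl, rfl⟩ | ⟨rfl, rfl⟩ |
        ⟨rfl, hq⟩ | ⟨hp, rfl⟩ | ⟨rfl, hq⟩ | ⟨hp, rfl⟩ |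
        ⟨rfl, hq⟩ | ⟨hp, rfl⟩ | ⟨rfl, hq⟩ | ⟨hp, rfl⟩)
      · exact huv
      · exact hvw
      · exact hwz
      · exact hzu
      · exact hq.2
      · exact outA p hp.1 hp.2
      · exact hq.2
      · exact outB p hp.1 hp.2
      · exact hq.2
      · exact outC p hp.1 hp.2
      · exact hq.2
      · exact outE p hp.1 hp.2
end
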